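/- Suppose gadgets G_0,...,G_{n-1} each have states and satisfy: whenever G_i is in state (L,L) (resp. (S,L)) and G_{i+1} is in state (S,S), there is a sequence of 7 consecutive 2-changes leaving G_i in state (S,L) (resp. (S,S)) and G_{i+1} in state (L,L); moreover G_{n-1} can go from (L,L) to (S,S) in 2 steps. Then if G_i is in state (L,L) and all G_j with j > i are in state (S,S), there exists a sequence of exactly 2^{n+3-i} - 14 consecutive 2-changes after which all gadgets G_j with j >= i are in state (S,S). -/
import Mathlib


/-- The three possible gadget states: `(L,L)`, `(S,L)` and `(S,S)`. -/
inductive GState : Type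
  | LL : GState
  | SL : GState
  | SS : GState

/-- `Reaches step k c c'` means that `c'` can be obtained from `c` by a sequence of exactly
`k` consecutive steps of the relation `step` (e.g. `k` consecutive 2-changes). -/
def Reaches {C : Type*} (step : C → C → Prop) (k : ℕ) (c c' : C) : Prop :=
  ∃ d : ℕ → C, d 0 = c ∧ d k = c' ∧ ∀ m < k, step (d m) (d (m + 1))

/-- Suppose gadgets `G_0, …, G_{n-1}` each have states and satisfy: whenever `G_i` is in state
`(L,L)` (resp. `(S,L)`) and `G_{i+1}` is in state `(S,S)`, there is a sequence of 7 consecutive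
2-changes leaving `G_i` in state `(S,L)` (resp. `(S,S)`) and `G_{i+1}` in state `(L,L)` (and all
other gadgets unchanged); moreover `G_{n-1}` can go from `(L,L)` to `(S,S)` in 2 steps. Then if
`G_i` is in state `(L,L)` and all `G_j` with `j > i` are in state `(S,S)`, there exists a
sequence of exactly `2^(n+3-i) - 14` consecutive 2-changes after which all gadgets `G_j` with
`j ≥ i` are in state `(S,S)` (and gadgets `G_j` with `j < i` are unchanged). -/
theorem stmt1 {C : Type*} (n : ℕ) (hn : 1 ≤ n)
    (step : C → C → Prop) (st : C → ℕ → GState)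
    (h7LL : ∀ i, i + 2 ≤ n → ∀ c, st c i = GState.LL → st c (i + 1) = GState.SS →
      ∃ c', Reaches step 7 c c' ∧ st c' i = GState.SL ∧ st c' (i + 1) = GState.LL ∧
        ∀ j, j ≠ i → j ≠ i + 1 → st c' j = st c j)
    (h7SL : ∀ i, i + 2 ≤ n → ∀ c, st c i = GState.SL → st c (i + 1) = GState.SS →
      ∃ c', Reaches step 7 c c' ∧ st c' i = GState.SS ∧ st c' (i + 1) = GState.LL ∧
        ∀ j, j ≠ i → j ≠ i + 1 → st c' j = st c j)
    (h2 : ∀ c, st c (n - 1) = GState.LL →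
      ∃ c', Reaches step 2 c c' ∧ st c' (n - 1) = GState.SS ∧
        ∀ j, j ≠ n - 1 → st c' j = st c j) :
    ∀ i, i < n → ∀ c, st c i = GState.LL → (∀ j, i < j → j < n → st c j = GState.SS) →
      ∃ c', Reaches step (2 ^ (n + 3 - i) - 14) c c' ∧
        (∀ j, i ≤ j → j < n → st c' j = GState.SS) ∧
        ∀ j, j < i → st c' j = st c j := by
  have chain : ∀ (k m : ℕ) (a b c' : C), Reaches step k a b → Reaches step m b c' →
      Reaches step (k + m) a c' := by
    rintro k m a b c ⟨d, hd0, hdk, hds⟩ ⟨e, he0, hem, hes⟩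
    refine ⟨fun t => if t ≤ k then d t else e (t - k), by simp [hd0], ?_, ?_⟩
    · rcases Nat.eq_zero_or_pos m with hm | hm
      · subst hm; simp [hdk, ← hem, he0]
      · have : ¬ (k + m ≤ k) := by omega
        simp [this, hem]
    · intro t ht
      rcases lt_trichotomy t k with h | h | h
      · have h1 : t ≤ k := le_of_lt h
        have h2 : t + 1 ≤ k := h
        simp only [if_pos h1, if_pos h2]
        exact hds t h
      · subst h
        have hm : 0 < m := by omega
        have : ¬ (t + 1 ≤ t) := by omega
        simp only [le_refl, if_pos, this, if_neg, Nat.add_sub_cancel_left, hdk, ← he0]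
        have := hes 0 hm
        simpa using this
      · have h1 : ¬ (t ≤ k) := by omega
        have h2 : ¬ (t + 1 ≤ k) := by omega
        simp only [if_neg h1, if_neg h2]
        have heq : t + 1 - k = (t - k) + 1 := by omega
        rw [heq]
        exact hes (t - k) (by omega)
  suffices H : ∀ k i, n - 1 - i = k → i < n → ∀ c, st c i = GState.LL →
      (∀ j, i < j → j < n → st c j = GState.SS) →
      ∃ c', Reaches step (2 ^ (n + 3 - i) - 14) c c' ∧
        (∀ j, i ≤ j → j < n → st c' j = GState.SS) ∧
        ∀ j, j < i → st c' j = st c j by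
    intro i hi c h1 h2
    exact H (n - 1 - i) i rfl hi c h1 h2
  intro k
  induction k with
  | zero =>
    intro i hk hi c hLL _
    have hi' : i = n - 1 := by omega
    subst hi'
    obtain ⟨c', hr, hss, hrest⟩ := h2 c hLL
    have hexp : n + 3 - (n - 1) = 4 := by omega
    refine ⟨c', by rw [hexp]; exact hr, ?_, ?_⟩
    · intro j hj1 hj2
      have : j = n - 1 := by omega
      rw [this]; exact hss
    · intro j hj; exact hrest j (by omega)
  | succ k ih =>
    intro i hk hi c hLL hSS
    have hin : i + 2 ≤ n := by omega
    obtain ⟨c1, hr1, hc1i, hc1i1, hc1rest⟩ := h7LL i hin c hLL (hSS (i + 1) (by omega) (by omega))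
    obtain ⟨c2, hr2, hc2ss, hc2rest⟩ := ih (i + 1) (by omega) (by omega) c1 hc1i1
      (fun j hj1 hj2 => by
        rw [hc1rest j (by omega) (by omega)]; exact hSS j (by omega) hj2)
    have hc2i : st c2 i = GState.SL := by rw [hc2rest i (by omega)]; exact hc1i
    obtain ⟨c3, hr3, hc3i, hc3i1, hc3rest⟩ := h7SL i hin c2 hc2i (hc2ss (i + 1) le_rfl (by omega))
    obtain ⟨c4, hr4, hc4ss, hc4rest⟩ := ih (i + 1) (by omega) (by omega) c3 hc3i1
      (fun j hj1 hj2 => by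
        rw [hc3rest j (by omega) (by omega)]; exact hc2ss j (by omega) hj2)
    set T := 2 ^ (n + 3 - (i + 1)) - 14 with hT
    have hpow : (16 : ℕ) ≤ 2 ^ (n + 3 - (i + 1)) := by
      calc (16 : ℕ) = 2 ^ 4 := by norm_num
      _ ≤ 2 ^ (n + 3 - (i + 1)) := Nat.pow_le_pow_right (by norm_num) (by omega)
    have hsum : 2 ^ (n + 3 - i) - 14 = 7 + (T + (7 + T)) := by
      have h1 : n + 3 - i = (n + 3 - (i + 1)) + 1 := by omega
      rw [h1, pow_succ, hT]
      omega
    refine ⟨c4, ?_, ?_, ?_⟩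
    · rw [hsum]
      exact chain _ _ _ _ _ hr1 (chain _ _ _ _ _ hr2 (chain _ _ _ _ _ hr3 hr4))
    · intro j hj1 hj2
      rcases eq_or_lt_of_le hj1 with h | h
      · rw [← h, hc4rest i (by omega)]; exact hc3i
      · exact hc4ss j h hj2
    · intro j hj
      rw [hc4rest j (by omega), hc3rest j (by omega) (by omega),
        hc2rest j (by omega), hc1rest j (by omega) (by omega)]
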